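/- Let U be a computably transparent, inflationary, idempotent partial multifunction on ℕ. Define a partial binary operation ∗_U on 𝒫(ℕ) by α ∗_U β := ⋃{U(a ∗ b) : a ∈ α, b ∈ β}, where α ∗_U β is defined if and only if for all a ∈ α and b ∈ β, a ∗ b is defined and a ∗ b ∈ dom(U). Then (𝒫(ℕ), ⊆, ∗_U) is an order partial combinatory algebra. -/

import Mathlib

namespace KleeneOracle

/-- `e ∗ x`: application of the `e`-th partial computable function on ℕ. -/
def ap (e x : ℕ) : Part ℕ :=
  Nat.Partrec.Code.eval (Denumerable.ofNat Nat.Partrec.Code e) x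

/-- `e ∗ A := {e ∗ a : a ∈ A}`. -/
def apSet (e : ℕ) (A : Set ℕ) : Set ℕ := {z | ∃ a ∈ A, z ∈ ap e a}

/-- A partial multifunction on ℕ. -/
abbrev Multifun := ℕ → Part (Set ℕ)

def Transparent (U : Multifun) : Prop :=
  ∃ u : ℕ, ∀ (e x : ℕ) (A : Set ℕ), A ∈ U x → (∀ y ∈ A, (ap e y).Dom) →
    ∃ c ∈ ap u e, ∃ d ∈ ap c x, ∃ B ∈ U d, B ⊆ apSet e A

def Inflationary (U : Multifun) : Prop :=
  ∃ η : ℕ, ∀ x : ℕ, ∃ c ∈ ap η x, ∃ B ∈ U c, B ⊆ {x}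

def mcomp (g f : Multifun) : Multifun := fun x =>
  ⟨∃ A ∈ f x, ∀ y ∈ A, (g y).Dom,
   fun _ => {z | ∃ A ∈ f x, ∃ y ∈ A, ∃ B ∈ g y, z ∈ B}⟩

def Idempotent (U : Multifun) : Prop :=
  ∃ μ : ℕ, ∀ (x : ℕ) (A : Set ℕ), A ∈ mcomp U U x →
    ∃ c ∈ ap μ x, ∃ B ∈ U c, B ⊆ A

def mRed (f g : Multifun) : Prop :=
  ∃ e : ℕ, ∀ (x : ℕ) (A : Set ℕ), A ∈ f x →
    ∃ c ∈ ap e x, ∃ B ∈ g c, B ⊆ A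

def wRed (f g : Multifun) : Prop :=
  ∃ em ep : ℕ, ∀ (x : ℕ) (A : Set ℕ), A ∈ f x →
    ∃ c ∈ ap em x, ∃ B ∈ g c, ∀ y ∈ B, ∃ z ∈ ap ep (Nat.pair x y), z ∈ A

def Weih (g : Multifun) : Multifun := fun w =>
  ⟨∃ c ∈ ap w.unpair.1 w.unpair.2.unpair.2, ∃ B ∈ g c,
     ∀ y ∈ B, (ap w.unpair.2.unpair.1 (Nat.pair w.unpair.2.unpair.2 y)).Dom,
   fun _ => {z | ∃ c ∈ ap w.unpair.1 w.unpair.2.unpair.2, ∃ B ∈ g c,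
     ∃ y ∈ B, z ∈ ap w.unpair.2.unpair.1 (Nat.pair w.unpair.2.unpair.2 y)}⟩

def idsq (g : Multifun) : Multifun := fun w =>
  if w.unpair.1 = 0 then Part.some {w.unpair.2}
  else if w.unpair.1 = 1 then g w.unpair.2
  else Part.none

def pWeih (g : Multifun) : Multifun := Weih (idsq g)

def pwRed (f g : Multifun) : Prop := wRed f (idsq g)

def Med (Q : Set ℕ) : Multifun := fun e =>
  ⟨∀ a ∈ Q, (ap e a).Dom, fun _ => apSet e Q⟩

def MedRed (P Q : Set ℕ) : Prop :=
  ∃ e : ℕ, (∀ a ∈ Q, (ap e a).Dom) ∧ apSet e Q ⊆ P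

def constMF (P : Set ℕ) : Multifun := fun _ => Part.some P

def imp (p q : Set ℕ) : Set ℕ := {e | ∀ x ∈ p, ∃ z ∈ ap e x, z ∈ q}

def OpMonotone (j : Set ℕ → Set ℕ) : Prop :=
  ∃ u : ℕ, ∀ p q : Set ℕ, ∀ a ∈ imp p q, ∃ c ∈ ap u a, c ∈ imp (j p) (j q)

def OpInflationary (j : Set ℕ → Set ℕ) : Prop :=
  ∃ e : ℕ, ∀ p : Set ℕ, e ∈ imp p (j p)

def OpIdempotent (j : Set ℕ → Set ℕ) : Prop :=
  ∃ e : ℕ, ∀ p : Set ℕ, e ∈ imp (j (j p)) (j p)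

def LawvereTierney (j : Set ℕ → Set ℕ) : Prop :=
  OpMonotone j ∧ OpInflationary j ∧ OpIdempotent j

def jU (U : Multifun) (p : Set ℕ) : Set ℕ := {x | ∃ A ∈ U x, A ⊆ p}

def SingleValued (U : Multifun) : Prop := ∀ x : ℕ, ∀ A ∈ U x, ∃ y : ℕ, A = {y}

def presInter (j : Set ℕ → Set ℕ) : Prop :=
  ∀ (ι : Type) [Nonempty ι] (p : ι → Set ℕ), j (⋂ i, p i) = ⋂ i, j (p i)

def presUnion (j : Set ℕ → Set ℕ) : Prop :=
  ∀ (ι : Type) (p : ι → Set ℕ), j (⋃ i, p i) = ⋃ i, j (p i)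

def Uop (j : Set ℕ → Set ℕ) : Multifun := fun x =>
  ⟨∃ p : Set ℕ, x ∈ j p, fun _ => ⋂₀ {p : Set ℕ | x ∈ j p}⟩

def mMorphism (e : ℕ) (f g : Multifun) : Prop :=
  ∀ (x : ℕ) (A : Set ℕ), A ∈ f x → ∃ c ∈ ap e x, ∃ B ∈ g c, B ⊆ A

def rMorphism (e : ℕ) (j k : Set ℕ → Set ℕ) : Prop :=
  ∀ p : Set ℕ, e ∈ imp (j p) (k p)

def rRed (j k : Set ℕ → Set ℕ) : Prop := ∃ e : ℕ, rMorphism e j k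


/-- The partial binary operation `α ∗_U β` on `𝒫(ℕ)`. -/
def opApp (U : Multifun) (α β : Set ℕ) : Part (Set ℕ) :=
  ⟨∀ a ∈ α, ∀ b ∈ β, ∃ c ∈ ap a b, (U c).Dom,
   fun _ => {z | ∃ a ∈ α, ∃ b ∈ β, ∃ c ∈ ap a b, ∃ B ∈ U c, z ∈ B}⟩

/-- An order partial combinatory algebra structure for a partial binary operation on a
partially ordered set. -/
def IsOrderPCA {M : Type*} [PartialOrder M] (app : M → M → Part M) : Prop :=
  (∀ (a b a' b' v : M), v ∈ app a b → a' ≤ a → b' ≤ b →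
    ∃ w ∈ app a' b', w ≤ v) ∧
  (∃ k s : M,
    (∀ a b : M, ∃ ka ∈ app k a, ∃ kab ∈ app ka b, kab ≤ a) ∧
    (∀ a b : M, ∃ sa ∈ app s a, ∃ sab ∈ app sa b,
      ∀ (c ac bc v : M), ac ∈ app a c → bc ∈ app b c → v ∈ app ac bc →
        ∃ w ∈ app sab c, w ≤ v))

open Nat.Partrec (Code)
open Nat.Partrec.Code

private lemma apP : Partrec₂ ap :=
  eval_part.comp ((Computable.ofNat _).comp Computable.fst) Computable.snd

private lemma smn {f : ℕ →. ℕ} (hf : Partrec f) :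
    ∃ g : ℕ → ℕ, Computable g ∧ ∀ a b : ℕ, ap (g a) b = f (Nat.pair a b) := by
  obtain ⟨c, hc⟩ := exists_code.mp (Partrec.nat_iff.mp hf)
  refine ⟨fun a => Encodable.encode (c.curry a), ?_, fun a b => ?_⟩
  · exact (Primrec.encode.comp
      (primrec₂_curry.comp (_root_.Primrec.const c) _root_.Primrec.id)).to_comp
  · simp [ap, eval_curry, hc]

private lemma exists_index {f : ℕ →. ℕ} (hf : Partrec f) :
    ∃ e : ℕ, ∀ x, ap e x = f x := by
  obtain ⟨c, hc⟩ := exists_code.mp (Partrec.nat_iff.mp hf)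
  exact ⟨Encodable.encode c, fun x => by simp [ap, hc]⟩

private lemma cunp : Computable Nat.unpair := Primrec.unpair.to_comp

private lemma k_code (η : ℕ) : ∃ k₀ : ℕ, ∃ gK : ℕ → ℕ,
    (∀ a, ap k₀ a = ap η (gK a)) ∧ (∀ a b, ap (gK a) b = ap η a) := by
  have hK : Partrec fun n : ℕ => ap η n.unpair.1 :=
    apP.comp (Computable.const η) (Computable.fst.comp cunp)
  obtain ⟨gK, hgKc, hgK⟩ := smn hK
  have hk : Partrec fun a : ℕ => ap η (gK a) :=
    apP.comp (Computable.const η) hgKc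
  obtain ⟨k₀, hk₀⟩ := exists_index hk
  exact ⟨k₀, gK, hk₀, fun a b => by simpa using hgK a b⟩

private lemma s_code (u μ η : ℕ) : ∃ s₀ : ℕ, ∃ gH gG gF : ℕ → ℕ,
    (∀ a, ap s₀ a = ap η (gH a)) ∧
    (∀ a b, ap (gH a) b = ap η (gG (Nat.pair a b))) ∧
    (∀ a b g, ap (gG (Nat.pair a b)) g = (ap a g).bind fun w =>
      (ap u (gF (Nat.pair b g))).bind fun c => (ap c w).bind (ap μ)) ∧
    (∀ b g x, ap (gF (Nat.pair b g)) x = (ap b g).bind fun w =>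
      (ap u x).bind fun c => (ap c w).bind (ap μ)) := by
  have hF : Partrec fun n : ℕ => (ap n.unpair.1.unpair.1 n.unpair.1.unpair.2).bind
      fun w => (ap u n.unpair.2).bind fun c => (ap c w).bind (ap μ) := by
    apply Partrec.bind
    · exact apP.comp (Computable.fst.comp (cunp.comp (Computable.fst.comp cunp)))
        (Computable.snd.comp (cunp.comp (Computable.fst.comp cunp)))
    · apply Partrec.bind
      · exact apP.comp (Computable.const u)
          (Computable.snd.comp (cunp.comp Computable.fst))
      · apply Partrec.bind
        · exact apP.comp Computable.snd (Computable.snd.comp Computable.fst)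
        · exact apP.comp (Computable.const μ) Computable.snd
  obtain ⟨gF, hgFc, hgF⟩ := smn hF
  have hG : Partrec fun n : ℕ => (ap n.unpair.1.unpair.1 n.unpair.2).bind
      fun w => (ap u (gF (Nat.pair n.unpair.1.unpair.2 n.unpair.2))).bind
        fun c => (ap c w).bind (ap μ) := by
    apply Partrec.bind
    · exact apP.comp (Computable.fst.comp (cunp.comp (Computable.fst.comp cunp)))
        (Computable.snd.comp cunp)
    · apply Partrec.bind
      · exact apP.comp (Computable.const u)
          (hgFc.comp (Primrec₂.natPair.to_comp.comp
            (Computable.snd.comp (cunp.comp (Computable.fst.comp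
              (cunp.comp Computable.fst))))
            (Computable.snd.comp (cunp.comp Computable.fst))))
      · apply Partrec.bind
        · exact apP.comp Computable.snd (Computable.snd.comp Computable.fst)
        · exact apP.comp (Computable.const μ) Computable.snd
  obtain ⟨gG, hgGc, hgG⟩ := smn hG
  have hH : Partrec fun n : ℕ => ap η (gG n) :=
    apP.comp (Computable.const η) hgGc
  obtain ⟨gH, hgHc, hgH⟩ := smn hH
  have hs : Partrec fun a : ℕ => ap η (gH a) :=
    apP.comp (Computable.const η) hgHc
  obtain ⟨s₀, hs₀⟩ := exists_index hs
  refine ⟨s₀, gH, gG, gF, hs₀, fun a b => by simpa using hgH a b,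
    fun a b g => by simpa using hgG (Nat.pair a b) g,
    fun b g x => by simpa using hgF (Nat.pair b g) x⟩

private lemma mem_opApp {U : Multifun} {α β : Set ℕ} {v : Set ℕ} :
    v ∈ opApp U α β ↔ ((∀ a ∈ α, ∀ b ∈ β, ∃ c ∈ ap a b, (U c).Dom) ∧
      v = {z | ∃ a ∈ α, ∃ b ∈ β, ∃ c ∈ ap a b, ∃ B ∈ U c, z ∈ B}) :=
  ⟨fun ⟨h, e⟩ => ⟨h, e.symm⟩, fun ⟨h, e⟩ => ⟨h, e.symm⟩⟩

private lemma mem_mcomp {U : Multifun} {x : ℕ} {A : Set ℕ} (hA : A ∈ U x)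
    (hd : ∀ y ∈ A, (U y).Dom) :
    {z | ∃ A ∈ U x, ∃ y ∈ A, ∃ B ∈ U y, z ∈ B} ∈ mcomp U U x :=
  ⟨⟨A, hA, hd⟩, rfl⟩

/-- for a computably transparent, inflationary, idempotent partial
multifunction `U`, `(𝒫(ℕ), ⊆, ∗_U)` is an order partial combinatory algebra. -/
theorem orderPCA_of_oracle (U : Multifun)
    (h1 : Transparent U) (h2 : Inflationary U) (h3 : Idempotent U) :
    IsOrderPCA (opApp U) := by
  obtain ⟨u, hu⟩ := h1
  obtain ⟨η, hη⟩ := h2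
  obtain ⟨μ, hμ⟩ := h3
  constructor
  · -- monotonicity
    rintro α β α' β' v hv ha hb
    obtain ⟨hd, rfl⟩ := mem_opApp.mp hv
    refine ⟨_, mem_opApp.mpr ⟨fun a haa b hbb => hd a (ha haa) b (hb hbb), rfl⟩, ?_⟩
    rintro z ⟨p, hp, q, hq, c, hc, B, hB, hz⟩
    exact ⟨p, ha hp, q, hb hq, c, hc, B, hB, hz⟩
  · obtain ⟨k₀, gK, hk₀, hgK⟩ := k_code η
    obtain ⟨s₀, gH, gG, gF, hs₀, hgH, hgG, hgF⟩ := s_code u μ η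
    refine ⟨{k₀}, {s₀}, ?_, ?_⟩
    · -- K combinator
      intro α β
      have hdom1 : ∀ p ∈ ({k₀} : Set ℕ), ∀ a ∈ α, ∃ c ∈ ap p a, (U c).Dom := by
        intro p hp a _
        rw [Set.mem_singleton_iff] at hp; subst hp
        obtain ⟨c, hc, B, hB, _⟩ := hη (gK a)
        exact ⟨c, by rw [hk₀]; exact hc, Part.dom_iff_mem.mpr ⟨B, hB⟩⟩
      refine ⟨_, mem_opApp.mpr ⟨hdom1, rfl⟩, ?_⟩
      have hS₁el : ∀ z ∈ {z | ∃ p ∈ ({k₀} : Set ℕ), ∃ a ∈ α, ∃ c ∈ ap p a,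
          ∃ B ∈ U c, z ∈ B}, ∃ a ∈ α, z = gK a := by
        rintro z ⟨p, hp, a, ha, c, hc, B, hB, hz⟩
        rw [Set.mem_singleton_iff] at hp; subst hp
        obtain ⟨c', hc', B', hB', hB's⟩ := hη (gK a)
        rw [hk₀] at hc
        obtain rfl : c = c' := Part.mem_unique hc hc'
        obtain rfl : B = B' := Part.mem_unique hB hB'
        exact ⟨a, ha, hB's hz⟩
      have hdom2 : ∀ d ∈ {z | ∃ p ∈ ({k₀} : Set ℕ), ∃ a ∈ α, ∃ c ∈ ap p a,
          ∃ B ∈ U c, z ∈ B}, ∀ b ∈ β, ∃ c ∈ ap d b, (U c).Dom := by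
        intro d hd b _
        obtain ⟨a, _, rfl⟩ := hS₁el d hd
        obtain ⟨c, hc, B, hB, _⟩ := hη a
        exact ⟨c, by rw [hgK]; exact hc, Part.dom_iff_mem.mpr ⟨B, hB⟩⟩
      refine ⟨_, mem_opApp.mpr ⟨hdom2, rfl⟩, ?_⟩
      rintro z ⟨d, hd, b, hb, c, hc, B, hB, hz⟩
      obtain ⟨a, ha, rfl⟩ := hS₁el d hd
      obtain ⟨c', hc', B', hB', hB's⟩ := hη a
      rw [hgK] at hc
      obtain rfl : c = c' := Part.mem_unique hc hc'
      obtain rfl : B = B' := Part.mem_unique hB hB'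
      have hz' : z = a := hB's hz
      exact hz' ▸ ha
    · -- S combinator
      intro α β
      have hdom1 : ∀ p ∈ ({s₀} : Set ℕ), ∀ a ∈ α, ∃ c ∈ ap p a, (U c).Dom := by
        intro p hp a _
        rw [Set.mem_singleton_iff] at hp; subst hp
        obtain ⟨c, hc, B, hB, _⟩ := hη (gH a)
        exact ⟨c, by rw [hs₀]; exact hc, Part.dom_iff_mem.mpr ⟨B, hB⟩⟩
      refine ⟨_, mem_opApp.mpr ⟨hdom1, rfl⟩, ?_⟩
      have hS₁el : ∀ z ∈ {z | ∃ p ∈ ({s₀} : Set ℕ), ∃ a ∈ α, ∃ c ∈ ap p a,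
          ∃ B ∈ U c, z ∈ B}, ∃ a ∈ α, z = gH a := by
        rintro z ⟨p, hp, a, ha, c, hc, B, hB, hz⟩
        rw [Set.mem_singleton_iff] at hp; subst hp
        obtain ⟨c', hc', B', hB', hB's⟩ := hη (gH a)
        rw [hs₀] at hc
        obtain rfl : c = c' := Part.mem_unique hc hc'
        obtain rfl : B = B' := Part.mem_unique hB hB'
        exact ⟨a, ha, hB's hz⟩
      have hdom2 : ∀ d ∈ {z | ∃ p ∈ ({s₀} : Set ℕ), ∃ a ∈ α, ∃ c ∈ ap p a,
          ∃ B ∈ U c, z ∈ B}, ∀ b ∈ β, ∃ c ∈ ap d b, (U c).Dom := by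
        intro d hd b _
        obtain ⟨a, _, rfl⟩ := hS₁el d hd
        obtain ⟨c, hc, B, hB, _⟩ := hη (gG (Nat.pair a b))
        exact ⟨c, by rw [hgH]; exact hc, Part.dom_iff_mem.mpr ⟨B, hB⟩⟩
      refine ⟨_, mem_opApp.mpr ⟨hdom2, rfl⟩, ?_⟩
      have hS₂el : ∀ z ∈ {z | ∃ d ∈ {z | ∃ p ∈ ({s₀} : Set ℕ), ∃ a ∈ α,
          ∃ c ∈ ap p a, ∃ B ∈ U c, z ∈ B}, ∃ b ∈ β, ∃ c ∈ ap d b, ∃ B ∈ U c, z ∈ B},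
          ∃ a ∈ α, ∃ b ∈ β, z = gG (Nat.pair a b) := by
        rintro z ⟨d, hd, b, hb, c, hc, B, hB, hz⟩
        obtain ⟨a, ha, rfl⟩ := hS₁el d hd
        obtain ⟨c', hc', B', hB', hB's⟩ := hη (gG (Nat.pair a b))
        rw [hgH] at hc
        obtain rfl : c = c' := Part.mem_unique hc hc'
        obtain rfl : B = B' := Part.mem_unique hB hB'
        exact ⟨a, ha, b, hb, hB's hz⟩
      rintro γ ac bc v hac hbc hv
      obtain ⟨hdα, rfl⟩ := mem_opApp.mp hac
      obtain ⟨hdβ, rfl⟩ := mem_opApp.mp hbc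
      obtain ⟨hdv, rfl⟩ := mem_opApp.mp hv
      set Aγ := {z | ∃ a ∈ α, ∃ b ∈ γ, ∃ c ∈ ap a b, ∃ B ∈ U c, z ∈ B} with hAγ
      set Bγ := {z | ∃ a ∈ β, ∃ b ∈ γ, ∃ c ∈ ap a b, ∃ B ∈ U c, z ∈ B} with hBγ
      set v := {z | ∃ a ∈ Aγ, ∃ b ∈ Bγ, ∃ c ∈ ap a b, ∃ B ∈ U c, z ∈ B} with hvdef
      have key : ∀ a ∈ α, ∀ b ∈ β, ∀ g ∈ γ,
          ∃ c ∈ ap (gG (Nat.pair a b)) g, ∃ B ∈ U c, B ⊆ v := by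
        intro a ha b hb g hg
        obtain ⟨w₀, hw₀, hUw₀⟩ := hdα a ha g hg
        set X := (U w₀).get hUw₀ with hXdef
        have hX : X ∈ U w₀ := Part.get_mem hUw₀
        have hXsub : X ⊆ Aγ := fun x hx => ⟨a, ha, g, hg, w₀, hw₀, X, hX, hx⟩
        -- inner claim about e' := gF (pair b g)
        have inner : ∀ x ∈ X, ∃ r ∈ ap (gF (Nat.pair b g)) x, ∃ B ∈ U r, B ⊆ v := by
          intro x hx
          have hxA : x ∈ Aγ := hXsub hx
          obtain ⟨w₁, hw₁, hUw₁⟩ := hdβ b hb g hg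
          set Y := (U w₁).get hUw₁ with hYdef
          have hY : Y ∈ U w₁ := Part.get_mem hUw₁
          have hYsub : Y ⊆ Bγ := fun y hy => ⟨b, hb, g, hg, w₁, hw₁, Y, hY, hy⟩
          have htot : ∀ y ∈ Y, (ap x y).Dom := by
            intro y hy
            obtain ⟨c, hc, _⟩ := hdv x hxA y (hYsub hy)
            exact Part.dom_iff_mem.mpr ⟨c, hc⟩
          obtain ⟨c₁, hc₁, d₁, hd₁, B₁, hB₁, hB₁s⟩ := hu x w₁ Y hY htot
          have hUB₁ : ∀ z ∈ B₁, (U z).Dom := by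
            intro z hz
            obtain ⟨y, hy, hzy⟩ := hB₁s hz
            obtain ⟨c, hc, hcd⟩ := hdv x hxA y (hYsub hy)
            obtain rfl : z = c := Part.mem_unique hzy hc
            exact hcd
          obtain ⟨c₂, hc₂, B₂, hB₂, hB₂s⟩ := hμ d₁ _ (mem_mcomp hB₁ hUB₁)
          refine ⟨c₂, ?_, B₂, hB₂, ?_⟩
          · rw [hgF]
            refine Part.mem_bind_iff.mpr ⟨w₁, hw₁, ?_⟩
            refine Part.mem_bind_iff.mpr ⟨c₁, hc₁, ?_⟩
            exact Part.mem_bind_iff.mpr ⟨d₁, hd₁, hc₂⟩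
          · intro z hz
            obtain ⟨A, hA, y, hy, B, hB, hzB⟩ := hB₂s hz
            obtain rfl : A = B₁ := Part.mem_unique hA hB₁
            obtain ⟨y', hy', hyy'⟩ := hB₁s hy
            exact ⟨x, hxA, y', hYsub hy', y, hyy', B, hB, hzB⟩
        have htot' : ∀ x ∈ X, (ap (gF (Nat.pair b g)) x).Dom := by
          intro x hx
          obtain ⟨r, hr, _⟩ := inner x hx
          exact Part.dom_iff_mem.mpr ⟨r, hr⟩
        obtain ⟨c₁, hc₁, d₁, hd₁, B₁, hB₁, hB₁s⟩ := hu (gF (Nat.pair b g)) w₀ X hX htot'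
        have hUB₁ : ∀ z ∈ B₁, (U z).Dom := by
          intro z hz
          obtain ⟨x, hx, hzx⟩ := hB₁s hz
          obtain ⟨r, hr, B, hB, _⟩ := inner x hx
          obtain rfl : z = r := Part.mem_unique hzx hr
          exact Part.dom_iff_mem.mpr ⟨B, hB⟩
        obtain ⟨c₂, hc₂, B₂, hB₂, hB₂s⟩ := hμ d₁ _ (mem_mcomp hB₁ hUB₁)
        refine ⟨c₂, ?_, B₂, hB₂, ?_⟩
        · rw [hgG]
          refine Part.mem_bind_iff.mpr ⟨w₀, hw₀, ?_⟩
          refine Part.mem_bind_iff.mpr ⟨c₁, hc₁, ?_⟩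
          exact Part.mem_bind_iff.mpr ⟨d₁, hd₁, hc₂⟩
        · intro z hz
          obtain ⟨A, hA, y, hy, B, hB, hzB⟩ := hB₂s hz
          obtain rfl : A = B₁ := Part.mem_unique hA hB₁
          obtain ⟨x, hx, hyx⟩ := hB₁s hy
          obtain ⟨r, hr, B', hB', hB'v⟩ := inner x hx
          obtain rfl : y = r := Part.mem_unique hyx hr
          obtain rfl : B = B' := Part.mem_unique hB hB'
          exact hB'v hzB
      have keydom : ∀ t ∈ {z | ∃ d ∈ {z | ∃ p ∈ ({s₀} : Set ℕ), ∃ a ∈ α,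
          ∃ c ∈ ap p a, ∃ B ∈ U c, z ∈ B}, ∃ b ∈ β, ∃ c ∈ ap d b, ∃ B ∈ U c, z ∈ B},
          ∀ g ∈ γ, ∃ c ∈ ap t g, (U c).Dom := by
        intro t ht g hg
        obtain ⟨a, ha, b, hb, rfl⟩ := hS₂el t ht
        obtain ⟨c, hc, B, hB, _⟩ := key a ha b hb g hg
        exact ⟨c, hc, Part.dom_iff_mem.mpr ⟨B, hB⟩⟩
      refine ⟨_, mem_opApp.mpr ⟨keydom, rfl⟩, ?_⟩
      rintro z ⟨t, ht, g, hg, c, hc, B, hB, hz⟩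
      obtain ⟨a, ha, b, hb, rfl⟩ := hS₂el t ht
      obtain ⟨c', hc', B', hB', hB'v⟩ := key a ha b hb g hg
      obtain rfl : c = c' := Part.mem_unique hc hc'
      obtain rfl : B = B' := Part.mem_unique hB hB'
      exact hB'v hz


end KleeneOracle
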